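/- Let μ be a probability measure on a measurable space, h ≥ 0 a measurable function with ∫ h dμ = 1, ν = h·μ, and a > e. Then H(ν,μ) ≥ (1 − 1/log a)·∫_{h > a} h·log h dμ. -/

import Mathlib

open MeasureTheory ENNReal
open scoped Classical

noncomputable section

/-- Relative entropy (Kullback-Leibler information) `H(ν,μ)`:
`∫ log (dν/dμ) dν` if `ν ≪ μ` (and the integral exists), `+∞` otherwise. -/
def relEnt {Ω : Type*} [MeasurableSpace Ω] (ν μ : Measure Ω) : ℝ≥0∞ :=
  if ν ≪ μ ∧ Integrable (fun x => Real.log ((ν.rnDeriv μ) x).toReal) ν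
  then ENNReal.ofReal (∫ x, Real.log ((ν.rnDeriv μ) x).toReal ∂ν)
  else ∞

/-- The measure `ν = h·μ`. -/
def densMeas {Ω : Type*} [MeasurableSpace Ω] (μ : Measure Ω) (h : Ω → ℝ) : Measure Ω :=
  μ.withDensity fun x => ENNReal.ofReal (h x)

/-- The truncated measure `ν_a = (1/ν(h ≤ a)) · h · 1_{h ≤ a} · μ` for `ν = h·μ`. -/
def truncMeas {Ω : Type*} [MeasurableSpace Ω] (μ : Measure Ω) (h : Ω → ℝ) (a : ℝ) : Measure Ω :=
  ((densMeas μ h) {x | h x ≤ a})⁻¹ • (densMeas μ h).restrict {x | h x ≤ a}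

lemma sub_one_le_mul_log {t : ℝ} (ht : 0 ≤ t) : t - 1 ≤ t * Real.log t := by
  rcases eq_or_lt_of_le ht with h0 | h0
  · simp [← h0]
  · have hinv := Real.log_le_sub_one_of_pos (inv_pos.mpr h0)
    rw [Real.log_inv] at hinv
    have h2 : t * (-Real.log t) ≤ t * (t⁻¹ - 1) :=
      mul_le_mul_of_nonneg_left hinv ht
    rw [mul_sub, mul_inv_cancel₀ (ne_of_gt h0)] at h2
    nlinarith

/-- **Lemma 3.3 (1).** For `ν = h·μ` and `a > e`,
`H(ν,μ) ≥ (1 - 1/log a) ∫_{h>a} h log h dμ`. -/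
theorem entropy_ge_tail_entropy
    {Ω : Type*} [MeasurableSpace Ω] (μ : Measure Ω) (hprob : IsProbabilityMeasure μ)
    (h : Ω → ℝ) (hmeas : Measurable h) (hpos : ∀ x, 0 ≤ h x)
    (hint : IsProbabilityMeasure (densMeas μ h))
    (a : ℝ) (ha : a > Real.exp 1) :
    ENNReal.ofReal (1 - 1 / Real.log a) *
        ∫⁻ x in {x | a < h x}, ENNReal.ofReal (h x * Real.log (h x)) ∂μ ≤
      relEnt (densMeas μ h) μ := by
  classical
  set L := Real.log a with hLdef
  have he1 : (1:ℝ) < Real.exp 1 := by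
    have := Real.exp_one_gt_d9; linarith
  have ha1 : (1:ℝ) < a := lt_trans he1 ha
  have hL1 : 1 < L := by
    have : Real.log (Real.exp 1) < Real.log a :=
      Real.log_lt_log (Real.exp_pos 1) ha
    rwa [Real.log_exp] at this
  have hLpos : (0:ℝ) < L := lt_trans one_pos hL1
  have hcoef : (0:ℝ) ≤ 1 - 1 / L := by
    have : 1 / L < 1 := by
      rw [div_lt_one hLpos]; exact hL1
    linarith
  set A : Set Ω := {x | a < h x} with hAdef
  have hA : MeasurableSet A := measurableSet_lt measurable_const hmeas
  set f : Ω → NNReal := fun x => (h x).toNNReal with hfdef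
  have hf : Measurable f := hmeas.real_toNNReal
  have hnu : densMeas μ h = μ.withDensity fun x => (f x : ℝ≥0∞) := rfl
  unfold relEnt
  split_ifs with hcond
  · obtain ⟨hac, hInt⟩ := hcond
    -- the rnDeriv equals ofReal h a.e.
    have hrnd : (densMeas μ h).rnDeriv μ =ᵐ[μ] fun x => ENNReal.ofReal (h x) :=
      Measure.rnDeriv_withDensity μ hmeas.ennreal_ofReal
    have hrndν : (densMeas μ h).rnDeriv μ =ᵐ[densMeas μ h] fun x => ENNReal.ofReal (h x) :=
      hac.ae_le hrnd
    have hlogeq : (fun x => Real.log (((densMeas μ h).rnDeriv μ) x).toReal)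
        =ᵐ[densMeas μ h] fun x => Real.log (h x) := by
      filter_upwards [hrndν] with x hx
      rw [hx, ENNReal.toReal_ofReal (hpos x)]
    -- integrability of h log h over μ
    have hIntν : Integrable (fun x => Real.log (h x)) (densMeas μ h) :=
      hInt.congr hlogeq
    have hIntμ : Integrable (fun x => h x * Real.log (h x)) μ := by
      rw [hnu] at hIntν
      have := (integrable_withDensity_iff_integrable_smul hf).mp hIntν
      refine this.congr (Filter.Eventually.of_forall fun x => ?_)
      simp [hfdef, NNReal.smul_def, Real.coe_toNNReal _ (hpos x)]
    -- the integral identity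
    have hInteq : ∫ x, Real.log (((densMeas μ h).rnDeriv μ) x).toReal ∂(densMeas μ h)
        = ∫ x, h x * Real.log (h x) ∂μ := by
      rw [integral_congr_ae hlogeq, hnu, integral_withDensity_eq_integral_smul hf]
      refine integral_congr_ae (Filter.Eventually.of_forall fun x => ?_)
      simp [hfdef, NNReal.smul_def, Real.coe_toNNReal _ (hpos x)]
    rw [hInteq]
    -- integrability of h
    have hlint1 : ∫⁻ x, ENNReal.ofReal (h x) ∂μ = 1 := by
      have := hint.measure_univ
      rwa [densMeas, withDensity_apply _ MeasurableSet.univ, Measure.restrict_univ] at this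
    have hIntH : Integrable h μ := by
      refine ⟨hmeas.aestronglyMeasurable, ?_⟩
      show ∫⁻ x, (‖h x‖₊ : ℝ≥0∞) ∂μ < ∞
      have : ∀ x, (‖h x‖₊ : ℝ≥0∞) = ENNReal.ofReal (h x) := fun x => by
        exact Real.enorm_eq_ofReal (hpos x)
      simp_rw [this, hlint1]
      exact one_lt_top
    have hIntHμ : ∫ x, h x ∂μ = 1 := by
      rw [integral_eq_lintegral_of_nonneg_ae (Filter.Eventually.of_forall hpos)
        hmeas.aestronglyMeasurable, hlint1, ENNReal.toReal_one]
    -- nonnegativity of h log h on A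
    have hnnA : 0 ≤ᵐ[μ.restrict A] fun x => h x * Real.log (h x) := by
      rw [Filter.EventuallyLE, ae_restrict_iff' hA]
      refine Filter.Eventually.of_forall fun x hx => ?_
      exact mul_nonneg (hpos x) (Real.log_nonneg (le_of_lt (lt_trans ha1 hx)))
    -- rewrite lintegral as ofReal of integral
    have hlintA : ∫⁻ x in A, ENNReal.ofReal (h x * Real.log (h x)) ∂μ
        = ENNReal.ofReal (∫ x in A, h x * Real.log (h x) ∂μ) :=
      (ofReal_integral_eq_lintegral_ofReal hIntμ.integrableOn hnnA).symm
    rw [hlintA, ← ENNReal.ofReal_mul hcoef]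
    apply ENNReal.ofReal_le_ofReal
    -- now a purely real inequality
    set IA := ∫ x in A, h x * Real.log (h x) ∂μ with hIA
    set IAc := ∫ x in Aᶜ, h x * Real.log (h x) ∂μ with hIAc
    have hsplit : IA + IAc = ∫ x, h x * Real.log (h x) ∂μ :=
      integral_add_compl hA hIntμ
    rw [← hsplit]
    -- estimate on A : L * h ≤ h log h
    have hE1 : ∫ x in A, L * h x ∂μ ≤ IA := by
      refine setIntegral_mono_on (hIntH.const_mul L).integrableOn
        hIntμ.integrableOn hA fun x hx => ?_
      have hxa : a < h x := hx
      have hlog : L ≤ Real.log (h x) :=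
        Real.log_le_log (lt_trans one_pos ha1) hxa.le
      calc L * h x = h x * L := mul_comm _ _
        _ ≤ h x * Real.log (h x) := mul_le_mul_of_nonneg_left hlog (hpos x)
    -- estimate on Aᶜ : h - 1 ≤ h log h
    have hE2 : ∫ x in Aᶜ, (h x - 1) ∂μ ≤ IAc := by
      refine setIntegral_mono_on (hIntH.sub (integrable_const 1)).integrableOn
        hIntμ.integrableOn hA.compl fun x _ => sub_one_le_mul_log (hpos x)
    have hsplitH : (∫ x in A, h x ∂μ) + ∫ x in Aᶜ, h x ∂μ = 1 := by
      rw [integral_add_compl hA hIntH, hIntHμ]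
    have hμAc : (μ Aᶜ).toReal ≤ 1 := by
      have := prob_le_one (μ := μ) (s := Aᶜ)
      calc (μ Aᶜ).toReal ≤ (1 : ℝ≥0∞).toReal :=
            ENNReal.toReal_mono one_ne_top this
        _ = 1 := ENNReal.toReal_one
    have hE2' : (∫ x in Aᶜ, h x ∂μ) - (μ Aᶜ).toReal ≤ IAc := by
      have : ∫ x in Aᶜ, (h x - 1) ∂μ
          = (∫ x in Aᶜ, h x ∂μ) - (μ Aᶜ).toReal := by
        rw [integral_sub hIntH.integrableOn (integrable_const 1),
          setIntegral_const, smul_eq_mul, mul_one, measureReal_def]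
      linarith [hE2, this.symm.le]
    have hE1' : L * ∫ x in A, h x ∂μ ≤ IA := by
      rwa [integral_const_mul] at hE1
    have hIAnn : 0 ≤ ∫ x in A, h x ∂μ :=
      setIntegral_nonneg hA fun x _ => hpos x
    -- combine
    have key : -IAc ≤ IA / L := by
      have h1 : -IAc ≤ (μ Aᶜ).toReal - ∫ x in Aᶜ, h x ∂μ := by linarith
      have h2 : (μ Aᶜ).toReal - ∫ x in Aᶜ, h x ∂μ ≤ ∫ x in A, h x ∂μ := by
        linarith
      have h3 : ∫ x in A, h x ∂μ ≤ IA / L := by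
        rw [le_div_iff₀ hLpos]; linarith [hE1']
      linarith
    have : (1 - 1 / L) * IA = IA - IA / L := by
      field_simp
    rw [this]
    linarith
  · exact le_top

end
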